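/- Let (B,O) → (B',O) → (B',O') be one iteration of Scarf's algorithm on a block-partitioned hypergraphic instance with artificial 0-th row. Suppose the leaving column j_ℓ of the ordinal pivot O → O' is i-disliked w.r.t. O, where i is the separator of (B,O). Then: (i) the reference column j_r of the ordinal pivot is the rightmost column of O; (ii) j_r is 0-disliked w.r.t. O and the entering column j* is 0-disliked w.r.t. O'; and (iii) if the algorithm does not terminate, the separator of (B',O') is some i' > i. -/
import Mathlib


/-- The block-partitioned matrices of a hypergraphic preference system, augmented with
an artificial `0`-th row and column.  Rows are the vertices `0,1,…,n` (vertex `0`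
artificial), columns are the hyperedges `0,1,…,m`; column `Fin.castLE _ i` is the
singleton hyperedge `{i}`.  `Inc i j` records that vertex `i` belongs to the
hyperedge of column `j`, and `blk j` is the block (the maximum vertex of the
hyperedge) of each non-singleton column `j` (those with `n < j`). -/
structure BlockPartitioned (n m : ℕ) where
  hnm : n ≤ m
  C : Matrix (Fin (n+1)) (Fin (m+1)) ℝ
  Inc : Fin (n+1) → Fin (m+1) → Prop
  blk : Fin (m+1) → Fin (n+1)
  /-- every row of `C` has pairwise distinct entries -/
  distinct : ∀ i : Fin (n+1), ∀ j k : Fin (m+1), j ≠ k → C i j ≠ C i k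
  /-- the `0`-th row is `(0, m, m-1, …, 1)` -/
  row0_zero : C 0 0 = 0
  row0_pos : ∀ j : Fin (m+1), j ≠ 0 → 0 < C 0 j
  row0_dec : ∀ j k : Fin (m+1), j ≠ 0 → j < k → C 0 k < C 0 j
  /-- the singleton column of `i'` is incident exactly to `i'` -/
  inc_sing : ∀ i i' : Fin (n+1), Inc i (Fin.castLE (Nat.succ_le_succ hnm) i') ↔ i = i'
  /-- singleton entries are `0` and are the row minimum -/
  sing_zero : ∀ i : Fin (n+1), i ≠ 0 → C i (Fin.castLE (Nat.succ_le_succ hnm) i) = 0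
  sing_min : ∀ i : Fin (n+1), i ≠ 0 → ∀ j : Fin (m+1),
    j ≠ Fin.castLE (Nat.succ_le_succ hnm) i →
    C i (Fin.castLE (Nat.succ_le_succ hnm) i) < C i j
  /-- incident entries of a row are smaller than non-incident ones -/
  inc_lt_noninc : ∀ i : Fin (n+1), i ≠ 0 → ∀ j k : Fin (m+1),
    Inc i j → ¬ Inc i k → C i j < C i k
  /-- non-incident entries of a row decrease from left to right -/
  noninc_dec : ∀ i : Fin (n+1), i ≠ 0 → ∀ j k : Fin (m+1),
    ¬ Inc i j → ¬ Inc i k → j < k → C i k < C i j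
  /-- a non-singleton column is incident to its block vertex, which is its maximum -/
  blk_mem : ∀ j : Fin (m+1), n < (j : ℕ) → Inc (blk j) j
  blk_max : ∀ j : Fin (m+1), n < (j : ℕ) → ∀ i, Inc i j → i ≤ blk j
  blk_ne0 : ∀ j : Fin (m+1), n < (j : ℕ) → blk j ≠ 0
  /-- blocks appear in increasing order -/
  blk_ord : ∀ j k : Fin (m+1), n < (j : ℕ) → n < (k : ℕ) → j < k → blk j ≤ blk k
  /-- within a block, entries of the block row decrease (preference order) -/
  inblock_dec : ∀ j k : Fin (m+1), n < (j : ℕ) → n < (k : ℕ) →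
    blk j = blk k → j < k → C (blk j) k < C (blk j) j

/-- Column `j` is `i`-disliked w.r.t. `O`: `j ∈ O` attains `min_{l ∈ O} C i l`. -/
def Dislikes {n m : ℕ} (C : Matrix (Fin (n+1)) (Fin (m+1)) ℝ)
    (O : Finset (Fin (m+1))) (i : Fin (n+1)) (j : Fin (m+1)) : Prop :=
  j ∈ O ∧ ∀ l ∈ O, C i j ≤ C i l

/-- Separator-change lemma.  In one iteration `(B,O) → (B',O) → (B',O')` on a
block-partitioned instance, if the leaving column `j_ℓ` of the ordinal pivot is
`i`-disliked w.r.t. `O` where `i = blk j→` is the separator of `(B,O)`, then: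
(i) the reference column `j_r` is the rightmost column of `O`; (ii) `j_r` is
`0`-disliked w.r.t. `O` and the entering column `j*` is `0`-disliked w.r.t.
`O' = O ∪ {j*} \ {j_ℓ}`; (iii) if the algorithm does not terminate (`j* ≠ 0`), the
separator of `(B',O')` is some `i' > i`. -/
theorem separator_strictly_increases (n m : ℕ) (BP : BlockPartitioned n m)
    (B O : Finset (Fin (m+1)))
    (hBcard : B.card = n + 1) (hOcard : O.card = n + 1)
    (hBO : B \ O = {0})
    (hdom : ∀ j : Fin (m+1), ∃ i, ∀ l ∈ O, BP.C i j ≤ BP.C i l)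
    (jar : Fin (m+1)) (hjar : Dislikes BP.C O 0 jar) (hjarblk : n < (jar : ℕ))
    (jl : Fin (m+1)) (hjl : Dislikes BP.C O (BP.blk jar) jl)
    (jr : Fin (m+1)) (hjr : Dislikes BP.C (O.erase jl) (BP.blk jar) jr)
    (ir : Fin (n+1)) (hir : Dislikes BP.C O ir jr)
    (jstar : Fin (m+1)) (hjs_notin : jstar ∉ O)
    (hjsK : ∀ i, i ≠ ir → ∀ l, Dislikes BP.C (O.erase jl) i l →
      BP.C i l < BP.C i jstar)
    (hjsmax : ∀ k, k ∉ O →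
      (∀ i, i ≠ ir → ∀ l, Dislikes BP.C (O.erase jl) i l → BP.C i l < BP.C i k) →
      BP.C ir k ≤ BP.C ir jstar) :
    (∀ l ∈ O, l ≤ jr) ∧
    Dislikes BP.C O 0 jr ∧
    Dislikes BP.C (insert jstar (O.erase jl)) 0 jstar ∧
    (jstar ≠ 0 → n < (jstar : ℕ) ∧ BP.blk jar < BP.blk jstar) := by
  classical
  have h0notO : (0 : Fin (m+1)) ∉ O := by
    have h : (0 : Fin (m+1)) ∈ B \ O := by rw [hBO]; exact Finset.mem_singleton_self 0
    exact (Finset.mem_sdiff.mp h).2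
  have hjar0 : jar ≠ 0 := by
    intro h; rw [h] at hjarblk; simp at hjarblk
  have hibne0 : BP.blk jar ≠ 0 := BP.blk_ne0 jar hjarblk
  -- jar is the rightmost column of O
  have hmaxO : ∀ l ∈ O, l ≤ jar := by
    intro l hl
    by_contra hlt
    push_neg at hlt
    exact absurd (hjar.2 l hl) (not_le.mpr (BP.row0_dec jar l hjar0 hlt))
  -- each row dislikes a unique column
  have uniq_col : ∀ v : Fin (n+1), ∀ l1 l2, Dislikes BP.C O v l1 → Dislikes BP.C O v l2 →
      l1 = l2 := by
    intro v l1 l2 h1 h2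
    by_contra hne
    exact BP.distinct v l1 l2 hne (le_antisymm (h1.2 l2 h2.1) (h2.2 l1 h1.1))
  -- the dislike relation is a perfect matching: each column is disliked by a unique row
  have hexists : ∀ l : {x // x ∈ O}, ∃ v : Fin (n+1), Dislikes BP.C O v l.1 := by
    rintro ⟨l, hl⟩
    obtain ⟨v, hv⟩ := hdom l
    exact ⟨v, hl, hv⟩
  choose g hg using hexists
  have ginj : Function.Injective g := by
    intro a b hab
    exact Subtype.ext (uniq_col (g a) a.1 b.1 (hg a) (hab ▸ hg b))
  have gsurj : Function.Surjective g := by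
    have h1 : Fintype.card {x // x ∈ O} = Fintype.card (Fin (n+1)) := by
      simp [Fintype.card_coe, hOcard]
    exact ((Fintype.bijective_iff_injective_and_card g).mpr ⟨ginj, h1⟩).2
  have uniq_row : ∀ v1 v2 : Fin (n+1), ∀ l, Dislikes BP.C O v1 l → Dislikes BP.C O v2 l →
      v1 = v2 := by
    intro v1 v2 l h1 h2
    obtain ⟨a, ha⟩ := gsurj v1
    obtain ⟨b, hb⟩ := gsurj v2
    have ha1 : a.1 = l := uniq_col v1 a.1 l (ha ▸ hg a) h1
    have hb1 : b.1 = l := uniq_col v2 b.1 l (hb ▸ hg b) h2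
    have hab : a = b := Subtype.ext (ha1.trans hb1.symm)
    rw [← ha, ← hb, hab]
  -- the leaving column is not jar
  have hjlne : jl ≠ jar := by
    intro h
    exact hibne0 (uniq_row (BP.blk jar) 0 jar (h ▸ hjl) hjar)
  have hjarmem : jar ∈ O.erase jl := Finset.mem_erase.mpr ⟨Ne.symm hjlne, hjar.1⟩
  -- jar attains the minimum of the separator row over O.erase jl
  have hminerase : ∀ l ∈ O.erase jl, BP.C (BP.blk jar) jar ≤ BP.C (BP.blk jar) l := by
    intro l hl
    obtain ⟨hlne, hlO⟩ := Finset.mem_erase.mp hl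
    rcases eq_or_ne l jar with rfl | hljar
    · exact le_refl _
    by_cases hIncl : BP.Inc (BP.blk jar) l
    · by_cases hln : (l : ℕ) ≤ n
      · -- l is a singleton column incident to the separator row: must be the leaving column
        exfalso
        have hv : l = Fin.castLE (Nat.succ_le_succ BP.hnm) ⟨l.1, Nat.lt_succ_of_le hln⟩ := by
          apply Fin.ext; simp
        have heq : BP.blk jar = ⟨l.1, Nat.lt_succ_of_le hln⟩ :=
          (BP.inc_sing (BP.blk jar) ⟨l.1, Nat.lt_succ_of_le hln⟩).mp (hv ▸ hIncl)
        have hsing : l = Fin.castLE (Nat.succ_le_succ BP.hnm) (BP.blk jar) := by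
          rw [heq]; exact hv
        have h1 := BP.sing_min (BP.blk jar) hibne0 jl (by rw [← hsing]; exact Ne.symm hlne)
        have h2 := hjl.2 l hlO
        rw [hsing] at h2
        exact absurd h2 (not_le.mpr h1)
      · -- l is a non-singleton column of the same block, left of jar
        push_neg at hln
        have hll : l < jar := lt_of_le_of_ne (hmaxO l hlO) hljar
        have h1 : BP.blk l ≤ BP.blk jar := BP.blk_ord l jar hln hjarblk hll
        have h2 : BP.blk jar ≤ BP.blk l := BP.blk_max l hln (BP.blk jar) hIncl
        have heq : BP.blk l = BP.blk jar := le_antisymm h1 h2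
        have h3 := BP.inblock_dec l jar hln hjarblk heq hll
        rw [heq] at h3
        exact le_of_lt h3
    · exact le_of_lt (BP.inc_lt_noninc (BP.blk jar) hibne0 jar l (BP.blk_mem jar hjarblk) hIncl)
  -- hence the reference column is jar
  have hjrjar : jr = jar := by
    by_contra hne
    exact BP.distinct (BP.blk jar) jr jar hne
      (le_antisymm (hjr.2 jar hjarmem) (hminerase jr hjr.1))
  have hir0 : ir = 0 := by
    refine uniq_row ir 0 jr hir ?_
    rw [hjrjar]; exact hjar
  -- any column of K lies strictly right of jar
  have claimA : ∀ k : Fin (m+1), k ∉ O → k ≠ 0 →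
      (∀ v, v ≠ ir → ∀ l, Dislikes BP.C (O.erase jl) v l → BP.C v l < BP.C v k) →
      jar < k := by
    intro k hkO hk0 hK
    obtain ⟨v, hv⟩ := hdom k
    rcases eq_or_ne v 0 with rfl | hv0
    · by_contra hlt
      push_neg at hlt
      have hkjar : k < jar := lt_of_le_of_ne hlt (fun h => hkO (h ▸ hjar.1))
      exact absurd (hv jar hjar.1) (not_le.mpr (BP.row0_dec k jar hk0 hkjar))
    · exfalso
      have hvir : v ≠ ir := by rw [hir0]; exact hv0
      obtain ⟨l0, hl0mem, hl0min⟩ :=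
        Finset.exists_min_image (O.erase jl) (fun l => BP.C v l) ⟨jar, hjarmem⟩
      have hKl := hK v hvir l0 ⟨hl0mem, hl0min⟩
      have hdl := hv l0 (Finset.mem_of_mem_erase hl0mem)
      exact absurd hdl (not_le.mpr hKl)
  refine ⟨?_, ?_, ?_, ?_⟩
  · intro l hl; rw [hjrjar]; exact hmaxO l hl
  · rw [hjrjar]; exact hjar
  · refine ⟨Finset.mem_insert_self _ _, ?_⟩
    intro l hl
    rcases Finset.mem_insert.mp hl with rfl | hl'
    · exact le_refl _
    · have hlO := Finset.mem_of_mem_erase hl'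
      have hl0 : l ≠ 0 := fun h => h0notO (h ▸ hlO)
      rcases eq_or_ne jstar 0 with h | hs0
      · rw [h, BP.row0_zero]; exact le_of_lt (BP.row0_pos l hl0)
      · have hjs : jar < jstar := claimA jstar hjs_notin hs0 hjsK
        have hls : l < jstar := lt_of_le_of_lt (hmaxO l hlO) hjs
        exact le_of_lt (BP.row0_dec l jstar hl0 hls)
  · intro hs0
    have hjs : jar < jstar := claimA jstar hjs_notin hs0 hjsK
    have h1 : n < (jstar : ℕ) := lt_trans hjarblk hjs
    refine ⟨h1, ?_⟩
    have hle : BP.blk jar ≤ BP.blk jstar := BP.blk_ord jar jstar hjarblk h1 hjs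
    rcases lt_or_eq_of_le hle with h | h
    · exact h
    · exfalso
      have hK := hjsK (BP.blk jar) (by rw [hir0]; exact hibne0) jar ⟨hjarmem, hminerase⟩
      have h2 := BP.inblock_dec jar jstar hjarblk h1 h hjs
      exact absurd hK (not_lt.mpr (le_of_lt h2))
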